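/- Let E be a complex Hilbert space and f : ℂ → E an entire analytic function such that the subharmonic function z ↦ ‖f(z)‖²_E admits a harmonic majorant on ℂ. Then f is constant. -/

import Mathlib

/-- If `f : ℂ → E` is entire (`E` a complex Hilbert space)
and the subharmonic function `z ↦ ‖f z‖²` admits a harmonic majorant on all of
`ℂ` (harmonic functions on the plane being exactly the real parts of entire
functions), then `f` is constant. -/
theorem entire_with_harmonic_majorant_is_constant
    (E : Type*) [NormedAddCommGroup E] [InnerProductSpace ℂ E] [CompleteSpace E]
    (f : ℂ → E) (hf : Differentiable ℂ f)
    (hmaj : ∃ F : ℂ → ℂ, Differentiable ℂ F ∧ ∀ z : ℂ, ‖f z‖ ^ 2 ≤ (F z).re) :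
    ∀ z w : ℂ, f z = f w := by
  obtain ⟨F, hF, hle⟩ := hmaj
  have hre : ∀ z, 0 ≤ (F z).re := fun z => le_trans (by positivity) (hle z)
  -- g = exp(-F) is entire and bounded, hence constant
  have hg : Differentiable ℂ (fun z => Complex.exp (-F z)) :=
    (hF.neg).cexp
  have hgb : Bornology.IsBounded (Set.range fun z => Complex.exp (-F z)) := by
    apply Bornology.IsBounded.subset (Metric.isBounded_closedBall (x := (0:ℂ)) (r := 1))
    rintro _ ⟨z, rfl⟩
    simp only [Metric.mem_closedBall, dist_zero_right,
      Complex.norm_exp, Complex.neg_re]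
    exact Real.exp_le_one_iff.2 (by linarith [hre z])
  have hgc : ∀ z w, Complex.exp (-F z) = Complex.exp (-F w) :=
    hg.apply_eq_apply_of_bounded hgb
  -- hence Re F is constant
  have hrec : ∀ z, (F z).re = (F 0).re := by
    intro z
    have h := congrArg (‖·‖) (hgc z 0)
    simp only [Complex.norm_exp, Complex.neg_re] at h
    have := Real.exp_injective h
    linarith
  -- so f is bounded, hence constant
  have hfb : Bornology.IsBounded (Set.range f) := by
    apply Bornology.IsBounded.subset
      (Metric.isBounded_closedBall (x := (0:E)) (r := Real.sqrt ((F 0).re)))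
    rintro _ ⟨z, rfl⟩
    simp only [Metric.mem_closedBall, dist_zero_right]
    have h1 : ‖f z‖ ^ 2 ≤ (F 0).re := (hrec z) ▸ hle z
    have := Real.sqrt_le_sqrt h1
    rwa [Real.sqrt_sq (norm_nonneg _)] at this
  exact hf.apply_eq_apply_of_bounded hfb
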